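/- For any norm ν on a Euclidean space E and any point x ∈ E, the subspace parallel to the subdifferential ∂ν(x) (i.e., ℝ·(∂ν(x) − ∂ν(x))) equals x^⊥ ∩ span(∂ν(x)). -/

import Mathlib

/-- The subdifferential of a function `ν` at `x`. -/
def subdiff {E : Type*} [NormedAddCommGroup E] [InnerProductSpace ℝ E]
    (ν : E → ℝ) (x : E) : Set E :=
  {y | ∀ w : E, (inner ℝ y (w - x) : ℝ) ≤ ν w - ν x}

/-- The subspace parallel to a set: `ℝ (C - C)`. -/
def parSet {E : Type*} [NormedAddCommGroup E] [InnerProductSpace ℝ E]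
    (C : Set E) : Set E :=
  {z | ∃ t : ℝ, ∃ u ∈ C, ∃ v ∈ C, z = t • (u - v)}

/-- The linear span of a set: `ℝ C - ℝ C`. -/
def spanSet {E : Type*} [NormedAddCommGroup E] [InnerProductSpace ℝ E]
    (C : Set E) : Set E :=
  {z | ∃ s t : ℝ, ∃ u ∈ C, ∃ v ∈ C, z = s • u - t • v}

theorem par_subdiff_eq {E : Type*} [NormedAddCommGroup E] [InnerProductSpace ℝ E]
    [FiniteDimensional ℝ E] (ν : E → ℝ)
    (hdef : ∀ x : E, ν x = 0 ↔ x = 0)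
    (hhom : ∀ (c : ℝ) (x : E), ν (c • x) = |c| * ν x)
    (htri : ∀ x y : E, ν (x + y) ≤ ν x + ν y)
    (x : E) :
    parSet (subdiff ν x) = {z : E | (inner ℝ z x : ℝ) = 0} ∩ spanSet (subdiff ν x) := by
  have hν0 : ν 0 = 0 := (hdef 0).mpr rfl
  -- every subgradient has ⟨y, x⟩ = ν x
  have hinner : ∀ y ∈ subdiff ν x, (inner ℝ y x : ℝ) = ν x := by
    intro y hy
    have h1 := hy 0
    have h2 := hy ((2 : ℝ) • x)
    have e1 : (inner ℝ y ((0 : E) - x) : ℝ) = -(inner ℝ y x : ℝ) := by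
      rw [zero_sub, inner_neg_right]
    have e2 : (inner ℝ y ((2 : ℝ) • x - x) : ℝ) = (inner ℝ y x : ℝ) := by
      have : (2 : ℝ) • x - x = x := by
        rw [two_smul]; abel
      rw [this]
    rw [e1, hν0] at h1
    rw [e2, hhom 2 x] at h2
    have : |(2 : ℝ)| = 2 := by norm_num
    rw [this] at h2
    linarith
  ext z
  constructor
  · rintro ⟨t, u, hu, v, hv, rfl⟩
    refine ⟨?_, t, t, u, hu, v, hv, by rw [smul_sub]⟩
    show (inner ℝ (t • (u - v)) x : ℝ) = 0
    rw [real_inner_smul_left, inner_sub_left, hinner u hu, hinner v hv]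
    ring
  · rintro ⟨hz, s, t, u, hu, v, hv, rfl⟩
    simp only [Set.mem_setOf_eq] at hz
    rw [inner_sub_left, real_inner_smul_left, real_inner_smul_left,
      hinner u hu, hinner v hv] at hz
    by_cases hx : x = 0
    · -- symmetric convex body case
      subst hx
      have hC : ∀ y ∈ subdiff ν (0 : E), ∀ w, (inner ℝ y w : ℝ) ≤ ν w := by
        intro y hy w
        have := hy w
        rwa [sub_zero, hν0, sub_zero] at this
      have hmem : ∀ y : E, (∀ w, (inner ℝ y w : ℝ) ≤ ν w) → y ∈ subdiff ν (0 : E) := by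
        intro y hy w
        rw [sub_zero, hν0, sub_zero]
        exact hy w
      have hνnn : ∀ w, 0 ≤ ν w := by
        intro w
        have h := htri w (-w)
        have : ν (-w) = ν w := by
          have := hhom (-1) w
          simpa using this
        rw [this] at h
        simp only [add_neg_cancel, hν0] at h
        linarith
      have h0 : (0 : E) ∈ subdiff ν (0 : E) := by
        apply hmem
        intro w
        simpa using hνnn w
      have hneg : ∀ y ∈ subdiff ν (0 : E), -y ∈ subdiff ν (0 : E) := by
        intro y hy
        apply hmem
        intro w
        have := hC y hy (-w)
        have hnw : ν (-w) = ν w := by simpa using hhom (-1) w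
        rw [inner_neg_right, hnw] at this
        rwa [inner_neg_left]
      -- sign-adjusted vectors
      set u' : E := if 0 ≤ s then u else -u with hu'def
      set v' : E := if 0 ≤ t then -v else v with hv'def
      have hu' : u' ∈ subdiff ν (0 : E) := by
        rw [hu'def]; split_ifs; exacts [hu, hneg u hu]
      have hv' : v' ∈ subdiff ν (0 : E) := by
        rw [hv'def]; split_ifs; exacts [hneg v hv, hv]
      have hsu : |s| • u' = s • u := by
        rw [hu'def]; split_ifs with h
        · rw [abs_of_nonneg h]
        · rw [abs_of_neg (not_le.mp h), smul_neg, neg_smul, neg_neg]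
      have htv : |t| • v' = -(t • v) := by
        rw [hv'def]; split_ifs with h
        · rw [abs_of_nonneg h, smul_neg]
        · rw [abs_of_neg (not_le.mp h), neg_smul]
      by_cases hr : |s| + |t| = 0
      · have hs0 : s = 0 := by
          have := abs_nonneg s; have := abs_nonneg t
          have : |s| = 0 := by linarith
          exact abs_eq_zero.mp this
        have ht0 : t = 0 := by
          have := abs_nonneg s; have := abs_nonneg t
          have : |t| = 0 := by linarith
          exact abs_eq_zero.mp this
        exact ⟨0, u, hu, u, hu, by rw [hs0, ht0]; simp⟩
      · have hrpos : 0 < |s| + |t| := by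
          rcases lt_or_eq_of_le (by positivity : (0:ℝ) ≤ |s| + |t|) with h | h
          · exact h
          · exact absurd h.symm hr
        set r : ℝ := |s| + |t| with hrdef
        set c : E := (|s| / r) • u' + (|t| / r) • v' with hcdef
        have hc : c ∈ subdiff ν (0 : E) := by
          apply hmem
          intro w
          rw [hcdef, inner_add_left, real_inner_smul_left, real_inner_smul_left]
          have h1 := hC u' hu' w
          have h2 := hC v' hv' w
          have ha : 0 ≤ |s| / r := by positivity
          have hb : 0 ≤ |t| / r := by positivity
          have hab : |s| / r + |t| / r = 1 := by
            field_simp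
            exact hrdef.symm
          have hle := add_le_add (mul_le_mul_of_nonneg_left h1 ha)
            (mul_le_mul_of_nonneg_left h2 hb)
          calc |s| / r * inner ℝ u' w + |t| / r * (inner ℝ v' w : ℝ)
              ≤ |s| / r * ν w + |t| / r * ν w := hle
            _ = ν w := by rw [← add_mul, hab, one_mul]
        refine ⟨r, c, hc, 0, h0, ?_⟩
        rw [sub_zero, hcdef, smul_add, smul_smul, smul_smul,
          mul_div_cancel₀ _ hr, mul_div_cancel₀ _ hr, hsu, htv]
        abel
    · have hνx : ν x ≠ 0 := fun h => hx ((hdef x).mp h)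
      have hst : s = t := by
        have : (s - t) * ν x = 0 := by linear_combination hz
        rcases mul_eq_zero.mp this with h | h
        · linarith [sub_eq_zero.mp h]
        · exact absurd h hνx
      exact ⟨s, u, hu, v, hv, by rw [hst, smul_sub]⟩
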